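/- Let λ ≠ 0, a ≠ 0, b, d ∈ ℝ, and define σ(s) = (x(s), y(s), z(s)) for as + b > 0 by x(s) = ((b+as)/a)(λ/√(1+λ²)) cos( (1/λ) arctanh(√((1+λ²)/(1+(b+as)²+λ²))) ), y(s) = -((b+as)/a)(λ/√(1+λ²)) sin( (1/λ) arctanh(√((1+λ²)/(1+(b+as)²+λ²))) ), z(s) = (1/a)√(1+(b+as)²+λ²)/√(1+λ²). Then σ is a unit-speed curve: |σ'(s)| = 1 for all s with as + b > 0. -/

import Mathlib

/-- Inverse hyperbolic tangent. -/
noncomputable def artanh (x : ℝ) : ℝ := Real.log ((1 + x) / (1 - x)) / 2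

/-- A point of `ℝ³` as Euclidean space. -/
noncomputable def V3 (x y z : ℝ) : EuclideanSpace ℝ (Fin 3) :=
  (WithLp.equiv 2 (Fin 3 → ℝ)).symm ![x, y, z]

theorem norm_V3 (x y z : ℝ) : ‖V3 x y z‖ = Real.sqrt (x ^ 2 + y ^ 2 + z ^ 2) := by
  simp [V3, EuclideanSpace.norm_eq, Fin.sum_univ_three, Real.norm_eq_abs, sq_abs]


set_option maxHeartbeats 1000000 in
/-- the whirl-rectifying parametrization is unit speed on
`{s : as + b > 0}`. -/
theorem whirl_rectifying_unit_speed
    (lam a b : ℝ) (hlam : lam ≠ 0) (ha : a ≠ 0)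
    (σ : ℝ → EuclideanSpace ℝ (Fin 3))
    (hσ : ∀ s, σ s = V3
      (((b + a * s) / a) * (lam / Real.sqrt (1 + lam ^ 2)) *
        Real.cos (artanh (Real.sqrt ((1 + lam ^ 2) / (1 + (b + a * s) ^ 2 + lam ^ 2))) / lam))
      (-(((b + a * s) / a) * (lam / Real.sqrt (1 + lam ^ 2)) *
        Real.sin (artanh (Real.sqrt ((1 + lam ^ 2) / (1 + (b + a * s) ^ 2 + lam ^ 2))) / lam)))
      ((1 / a) * (Real.sqrt (1 + (b + a * s) ^ 2 + lam ^ 2) / Real.sqrt (1 + lam ^ 2)))) :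
    ∀ s : ℝ, 0 < a * s + b →
      ∃ v : EuclideanSpace ℝ (Fin 3), HasDerivAt σ v s ∧ ‖v‖ = 1 := by
  intro s hs
  have hu : 0 < b + a * s := by linarith
  have hP : (0:ℝ) < 1 + lam ^ 2 := by positivity
  have hQ : (0:ℝ) < 1 + (b + a * s) ^ 2 + lam ^ 2 := by positivity
  have hsP : 0 < Real.sqrt (1 + lam ^ 2) := Real.sqrt_pos.mpr hP
  have hsQ : 0 < Real.sqrt (1 + (b + a * s) ^ 2 + lam ^ 2) := Real.sqrt_pos.mpr hQ
  have hsP2 : Real.sqrt (1 + lam ^ 2) ^ 2 = 1 + lam ^ 2 := Real.sq_sqrt hP.le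
  have hsQ2 : Real.sqrt (1 + (b + a * s) ^ 2 + lam ^ 2) ^ 2 = 1 + (b + a * s) ^ 2 + lam ^ 2 :=
    Real.sq_sqrt hQ.le
  have hwv : Real.sqrt ((1 + lam ^ 2) / (1 + (b + a * s) ^ 2 + lam ^ 2))
      = Real.sqrt (1 + lam ^ 2) / Real.sqrt (1 + (b + a * s) ^ 2 + lam ^ 2) :=
    Real.sqrt_div hP.le _
  have hwpos : 0 < Real.sqrt ((1 + lam ^ 2) / (1 + (b + a * s) ^ 2 + lam ^ 2)) :=
    Real.sqrt_pos.mpr (by positivity)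
  have hwlt : Real.sqrt ((1 + lam ^ 2) / (1 + (b + a * s) ^ 2 + lam ^ 2)) < 1 := by
    rw [hwv, div_lt_one hsQ]
    exact Real.sqrt_lt_sqrt hP.le (by nlinarith)
  have hu' : HasDerivAt (fun t => b + a * t) a s := by
    simpa using ((hasDerivAt_id s).const_mul a).const_add b
  have hQ' : HasDerivAt (fun t => 1 + (b + a * t) ^ 2 + lam ^ 2) (2 * (b + a * s) * a) s := by
    have := ((hu'.pow 2).const_add 1).add_const (lam ^ 2)
    refine (this).congr_deriv (Eq.symm ?_)
    push_cast; ring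
  -- derivative of w
  have hwd : HasDerivAt (fun t => Real.sqrt ((1 + lam ^ 2) / (1 + (b + a * t) ^ 2 + lam ^ 2)))
      (-(a * (b + a * s) * Real.sqrt (1 + lam ^ 2)) /
        ((1 + (b + a * s) ^ 2 + lam ^ 2) * Real.sqrt (1 + (b + a * s) ^ 2 + lam ^ 2))) s := by
    have h1 : HasDerivAt (fun t => (1 + lam ^ 2) / (1 + (b + a * t) ^ 2 + lam ^ 2))
        ((0 * (1 + (b + a * s) ^ 2 + lam ^ 2) - (1 + lam ^ 2) * (2 * (b + a * s) * a)) /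
          (1 + (b + a * s) ^ 2 + lam ^ 2) ^ 2) s := (hasDerivAt_const s _).div hQ' hQ.ne'
    have h2 := h1.sqrt (ne_of_gt (by positivity))
    convert h2 using 1
    rw [hwv]
    have hsP2' := hsP2; have hsQ2' := hsQ2
    have hsPne := hsP.ne'; have hsQne := hsQ.ne'
    generalize hp : Real.sqrt (1 + lam ^ 2) = p at hsP2' hsPne ⊢
    generalize hq : Real.sqrt (1 + (b + a * s) ^ 2 + lam ^ 2) = q at hsQ2' hsQne ⊢
    rw [← hsP2', ← hsQ2']
    field_simp
    ring
  -- theta derivative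
  have hθ : HasDerivAt (fun t =>
      artanh (Real.sqrt ((1 + lam ^ 2) / (1 + (b + a * t) ^ 2 + lam ^ 2))) / lam)
      (-(a * Real.sqrt (1 + lam ^ 2)) /
        (lam * (b + a * s) * Real.sqrt (1 + (b + a * s) ^ 2 + lam ^ 2))) s := by
    have hnum := hwd.const_add 1
    have hden := hwd.const_sub 1
    have hdne : (1 : ℝ) - Real.sqrt ((1 + lam ^ 2) / (1 + (b + a * s) ^ 2 + lam ^ 2)) ≠ 0 :=
      (sub_pos.mpr hwlt).ne'
    have hpne : (1 : ℝ) + Real.sqrt ((1 + lam ^ 2) / (1 + (b + a * s) ^ 2 + lam ^ 2)) ≠ 0 := by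
      positivity
    have hgpos : (0:ℝ) < (1 + Real.sqrt ((1 + lam ^ 2) / (1 + (b + a * s) ^ 2 + lam ^ 2))) /
        (1 - Real.sqrt ((1 + lam ^ 2) / (1 + (b + a * s) ^ 2 + lam ^ 2))) :=
      div_pos (by linarith) (sub_pos.mpr hwlt)
    have hgd : HasDerivAt (fun t =>
        (1 + Real.sqrt ((1 + lam ^ 2) / (1 + (b + a * t) ^ 2 + lam ^ 2))) /
          (1 - Real.sqrt ((1 + lam ^ 2) / (1 + (b + a * t) ^ 2 + lam ^ 2))))
        (2 * (-(a * (b + a * s) * Real.sqrt (1 + lam ^ 2)) /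
          ((1 + (b + a * s) ^ 2 + lam ^ 2) * Real.sqrt (1 + (b + a * s) ^ 2 + lam ^ 2))) /
          (1 - Real.sqrt ((1 + lam ^ 2) / (1 + (b + a * s) ^ 2 + lam ^ 2))) ^ 2) s := by
      refine (hnum.div hden hdne).congr_deriv (Eq.symm ?_)
      ring
    have hlogd : HasDerivAt (fun t =>
        Real.log ((1 + Real.sqrt ((1 + lam ^ 2) / (1 + (b + a * t) ^ 2 + lam ^ 2))) /
          (1 - Real.sqrt ((1 + lam ^ 2) / (1 + (b + a * t) ^ 2 + lam ^ 2)))))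
        (2 * (-(a * (b + a * s) * Real.sqrt (1 + lam ^ 2)) /
          ((1 + (b + a * s) ^ 2 + lam ^ 2) * Real.sqrt (1 + (b + a * s) ^ 2 + lam ^ 2))) /
          ((1 - Real.sqrt ((1 + lam ^ 2) / (1 + (b + a * s) ^ 2 + lam ^ 2))) *
           (1 + Real.sqrt ((1 + lam ^ 2) / (1 + (b + a * s) ^ 2 + lam ^ 2))))) s := by
      convert hgd.log hgpos.ne' using 1
      generalize Real.sqrt ((1 + lam ^ 2) / (1 + (b + a * s) ^ 2 + lam ^ 2)) = w at hdne hpne ⊢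
      generalize (-(a * (b + a * s) * Real.sqrt (1 + lam ^ 2)) /
          ((1 + (b + a * s) ^ 2 + lam ^ 2) * Real.sqrt (1 + (b + a * s) ^ 2 + lam ^ 2))) = A
      field_simp
    have H := (hlogd.div_const 2).div_const lam
    simp only [artanh]
    refine (H).congr_deriv (Eq.symm ?_)
    rw [hwv]
    have hsP2' := hsP2; have hsQ2' := hsQ2
    have hsPne := hsP.ne'; have hsQne := hsQ.ne'
    generalize hp : Real.sqrt (1 + lam ^ 2) = p at hsP2' hsPne hsP ⊢
    generalize hq : Real.sqrt (1 + (b + a * s) ^ 2 + lam ^ 2) = q at hsQ2' hsQne hsQ ⊢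
    have hrel : q ^ 2 = p ^ 2 + (b + a * s) ^ 2 := by rw [hsP2', hsQ2']; ring
    rw [← hsQ2']
    have hfac : (1 - p / q) * (1 + p / q) = (b + a * s) ^ 2 / q ^ 2 := by
      field_simp
      linear_combination hrel
    rw [hfac]
    field_simp
  -- component derivatives
  have hX : HasDerivAt (fun t => ((b + a * t) / a) * (lam / Real.sqrt (1 + lam ^ 2)) *
      Real.cos (artanh (Real.sqrt ((1 + lam ^ 2) / (1 + (b + a * t) ^ 2 + lam ^ 2))) / lam))
      (lam / Real.sqrt (1 + lam ^ 2) *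
        Real.cos (artanh (Real.sqrt ((1 + lam ^ 2) / (1 + (b + a * s) ^ 2 + lam ^ 2))) / lam) +
       Real.sin (artanh (Real.sqrt ((1 + lam ^ 2) / (1 + (b + a * s) ^ 2 + lam ^ 2))) / lam) /
        Real.sqrt (1 + (b + a * s) ^ 2 + lam ^ 2)) s := by
    have h := ((hu'.div_const a).mul_const (lam / Real.sqrt (1 + lam ^ 2))).mul hθ.cos
    refine (h).congr_deriv (Eq.symm ?_)
    generalize Real.cos (artanh (Real.sqrt ((1 + lam ^ 2) / (1 + (b + a * s) ^ 2 + lam ^ 2))) / lam) = C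
    generalize Real.sin (artanh (Real.sqrt ((1 + lam ^ 2) / (1 + (b + a * s) ^ 2 + lam ^ 2))) / lam) = S
    have hsPne := hsP.ne'; have hsQne := hsQ.ne'
    generalize Real.sqrt (1 + lam ^ 2) = p at hsPne ⊢
    generalize Real.sqrt (1 + (b + a * s) ^ 2 + lam ^ 2) = q at hsQne ⊢
    field_simp
  have hY : HasDerivAt (fun t => -(((b + a * t) / a) * (lam / Real.sqrt (1 + lam ^ 2)) *
      Real.sin (artanh (Real.sqrt ((1 + lam ^ 2) / (1 + (b + a * t) ^ 2 + lam ^ 2))) / lam)))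
      (-(lam / Real.sqrt (1 + lam ^ 2) *
        Real.sin (artanh (Real.sqrt ((1 + lam ^ 2) / (1 + (b + a * s) ^ 2 + lam ^ 2))) / lam)) +
       Real.cos (artanh (Real.sqrt ((1 + lam ^ 2) / (1 + (b + a * s) ^ 2 + lam ^ 2))) / lam) /
        Real.sqrt (1 + (b + a * s) ^ 2 + lam ^ 2)) s := by
    have h := (((hu'.div_const a).mul_const (lam / Real.sqrt (1 + lam ^ 2))).mul hθ.sin).neg
    refine (h).congr_deriv (Eq.symm ?_)
    generalize Real.cos (artanh (Real.sqrt ((1 + lam ^ 2) / (1 + (b + a * s) ^ 2 + lam ^ 2))) / lam) = C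
    generalize Real.sin (artanh (Real.sqrt ((1 + lam ^ 2) / (1 + (b + a * s) ^ 2 + lam ^ 2))) / lam) = S
    have hsPne := hsP.ne'; have hsQne := hsQ.ne'
    generalize Real.sqrt (1 + lam ^ 2) = p at hsPne ⊢
    generalize Real.sqrt (1 + (b + a * s) ^ 2 + lam ^ 2) = q at hsQne ⊢
    field_simp
    ring
  have hZ : HasDerivAt (fun t => (1 / a) *
      (Real.sqrt (1 + (b + a * t) ^ 2 + lam ^ 2) / Real.sqrt (1 + lam ^ 2)))
      ((b + a * s) /
        (Real.sqrt (1 + (b + a * s) ^ 2 + lam ^ 2) * Real.sqrt (1 + lam ^ 2))) s := by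
    have h := ((hQ'.sqrt hQ.ne').div_const (Real.sqrt (1 + lam ^ 2))).const_mul (1 / a)
    refine (h).congr_deriv (Eq.symm ?_)
    have hsPne := hsP.ne'; have hsQne := hsQ.ne'
    generalize Real.sqrt (1 + lam ^ 2) = p at hsPne ⊢
    generalize Real.sqrt (1 + (b + a * s) ^ 2 + lam ^ 2) = q at hsQne ⊢
    field_simp
  refine ⟨V3
      (lam / Real.sqrt (1 + lam ^ 2) *
        Real.cos (artanh (Real.sqrt ((1 + lam ^ 2) / (1 + (b + a * s) ^ 2 + lam ^ 2))) / lam) +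
       Real.sin (artanh (Real.sqrt ((1 + lam ^ 2) / (1 + (b + a * s) ^ 2 + lam ^ 2))) / lam) /
        Real.sqrt (1 + (b + a * s) ^ 2 + lam ^ 2))
      (-(lam / Real.sqrt (1 + lam ^ 2) *
        Real.sin (artanh (Real.sqrt ((1 + lam ^ 2) / (1 + (b + a * s) ^ 2 + lam ^ 2))) / lam)) +
       Real.cos (artanh (Real.sqrt ((1 + lam ^ 2) / (1 + (b + a * s) ^ 2 + lam ^ 2))) / lam) /
        Real.sqrt (1 + (b + a * s) ^ 2 + lam ^ 2))
      ((b + a * s) /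
        (Real.sqrt (1 + (b + a * s) ^ 2 + lam ^ 2) * Real.sqrt (1 + lam ^ 2))), ?_, ?_⟩
  · have hfun : σ = fun t => V3
        (((b + a * t) / a) * (lam / Real.sqrt (1 + lam ^ 2)) *
          Real.cos (artanh (Real.sqrt ((1 + lam ^ 2) / (1 + (b + a * t) ^ 2 + lam ^ 2))) / lam))
        (-(((b + a * t) / a) * (lam / Real.sqrt (1 + lam ^ 2)) *
          Real.sin (artanh (Real.sqrt ((1 + lam ^ 2) / (1 + (b + a * t) ^ 2 + lam ^ 2))) / lam)))
        ((1 / a) * (Real.sqrt (1 + (b + a * t) ^ 2 + lam ^ 2) / Real.sqrt (1 + lam ^ 2))) :=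
      funext hσ
    rw [hfun]
    have hpi : HasDerivAt (fun t => (![
        ((b + a * t) / a) * (lam / Real.sqrt (1 + lam ^ 2)) *
          Real.cos (artanh (Real.sqrt ((1 + lam ^ 2) / (1 + (b + a * t) ^ 2 + lam ^ 2))) / lam),
        -(((b + a * t) / a) * (lam / Real.sqrt (1 + lam ^ 2)) *
          Real.sin (artanh (Real.sqrt ((1 + lam ^ 2) / (1 + (b + a * t) ^ 2 + lam ^ 2))) / lam)),
        (1 / a) * (Real.sqrt (1 + (b + a * t) ^ 2 + lam ^ 2) / Real.sqrt (1 + lam ^ 2))] :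
        Fin 3 → ℝ))
        ![lam / Real.sqrt (1 + lam ^ 2) *
            Real.cos (artanh (Real.sqrt ((1 + lam ^ 2) / (1 + (b + a * s) ^ 2 + lam ^ 2))) / lam) +
          Real.sin (artanh (Real.sqrt ((1 + lam ^ 2) / (1 + (b + a * s) ^ 2 + lam ^ 2))) / lam) /
            Real.sqrt (1 + (b + a * s) ^ 2 + lam ^ 2),
          -(lam / Real.sqrt (1 + lam ^ 2) *
            Real.sin (artanh (Real.sqrt ((1 + lam ^ 2) / (1 + (b + a * s) ^ 2 + lam ^ 2))) / lam)) +
          Real.cos (artanh (Real.sqrt ((1 + lam ^ 2) / (1 + (b + a * s) ^ 2 + lam ^ 2))) / lam) /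
            Real.sqrt (1 + (b + a * s) ^ 2 + lam ^ 2),
          (b + a * s) /
            (Real.sqrt (1 + (b + a * s) ^ 2 + lam ^ 2) * Real.sqrt (1 + lam ^ 2))] s := by
      rw [hasDerivAt_pi]
      intro i; fin_cases i
      · simpa using hX
      · simpa using hY
      · simpa using hZ
    have hL := (PiLp.continuousLinearEquiv 2 ℝ
        (fun _ : Fin 3 => ℝ)).symm.toContinuousLinearMap.hasFDerivAt.comp_hasDerivAt s hpi
    exact hL
  · rw [norm_V3]
    have hcs : Real.sin (artanh (Real.sqrt ((1 + lam ^ 2) /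
        (1 + (b + a * s) ^ 2 + lam ^ 2))) / lam) ^ 2 +
        Real.cos (artanh (Real.sqrt ((1 + lam ^ 2) /
        (1 + (b + a * s) ^ 2 + lam ^ 2))) / lam) ^ 2 = 1 := Real.sin_sq_add_cos_sq _
    rw [show (lam / Real.sqrt (1 + lam ^ 2) *
        Real.cos (artanh (Real.sqrt ((1 + lam ^ 2) / (1 + (b + a * s) ^ 2 + lam ^ 2))) / lam) +
       Real.sin (artanh (Real.sqrt ((1 + lam ^ 2) / (1 + (b + a * s) ^ 2 + lam ^ 2))) / lam) /
        Real.sqrt (1 + (b + a * s) ^ 2 + lam ^ 2)) ^ 2 +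
      (-(lam / Real.sqrt (1 + lam ^ 2) *
        Real.sin (artanh (Real.sqrt ((1 + lam ^ 2) / (1 + (b + a * s) ^ 2 + lam ^ 2))) / lam)) +
       Real.cos (artanh (Real.sqrt ((1 + lam ^ 2) / (1 + (b + a * s) ^ 2 + lam ^ 2))) / lam) /
        Real.sqrt (1 + (b + a * s) ^ 2 + lam ^ 2)) ^ 2 +
      ((b + a * s) /
        (Real.sqrt (1 + (b + a * s) ^ 2 + lam ^ 2) * Real.sqrt (1 + lam ^ 2))) ^ 2 = 1 from ?_,
      Real.sqrt_one]
    have hsP2' := hsP2; have hsQ2' := hsQ2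
    have hsPne := hsP.ne'; have hsQne := hsQ.ne'
    generalize Real.cos (artanh (Real.sqrt ((1 + lam ^ 2) /
        (1 + (b + a * s) ^ 2 + lam ^ 2))) / lam) = C at hcs ⊢
    generalize Real.sin (artanh (Real.sqrt ((1 + lam ^ 2) /
        (1 + (b + a * s) ^ 2 + lam ^ 2))) / lam) = S at hcs ⊢
    generalize Real.sqrt (1 + lam ^ 2) = p at hsP2' hsPne ⊢
    generalize Real.sqrt (1 + (b + a * s) ^ 2 + lam ^ 2) = q at hsQ2' hsQne ⊢
    have hrel : q ^ 2 = p ^ 2 + (b + a * s) ^ 2 := by rw [hsP2', hsQ2']; ring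
    field_simp
    linear_combination (lam ^ 2 * q ^ 2 + p ^ 2) * hcs - hrel - q ^ 2 * hsP2'
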